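/- Let v ∈ ℤ³ be primitive with ‖v‖² divisible by d². Then Γ(v,d) = {a ∈ ℤ³ : d divides a × v and d² divides (a × v) × v} is a subgroup of ℤ³ of index d³ containing v. -/
import Mathlib


def dot3 (a b : Fin 3 → ℤ) : ℤ := a 0 * b 0 + a 1 * b 1 + a 2 * b 2

def cross3 (a b : Fin 3 → ℤ) : Fin 3 → ℤ :=
  ![a 1 * b 2 - a 2 * b 1, a 2 * b 0 - a 0 * b 2, a 0 * b 1 - a 1 * b 0]

lemma cross3_add_left (a b v : Fin 3 → ℤ) :
    cross3 (a + b) v = cross3 a v + cross3 b v := by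
  funext i; fin_cases i <;> simp [cross3] <;> ring

lemma cross3_zero_left (v : Fin 3 → ℤ) : cross3 0 v = 0 := by
  funext i; fin_cases i <;> simp [cross3]

lemma cross3_neg_left (a v : Fin 3 → ℤ) : cross3 (-a) v = -(cross3 a v) := by
  funext i; fin_cases i <;> simp [cross3] <;> ring

/-- The lattice `v^⊥` of integer vectors orthogonal to `v`. -/
def perpSub (v : Fin 3 → ℤ) : AddSubgroup (Fin 3 → ℤ) where
  carrier := {a | dot3 a v = 0}
  zero_mem' := by simp [dot3]
  add_mem' := by
    intro a b ha hb
    simp only [Set.mem_setOf_eq, dot3, Pi.add_apply] at *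
    linarith
  neg_mem' := by
    intro a ha
    simp only [Set.mem_setOf_eq, dot3, Pi.neg_apply] at *
    linarith

/-- The subgroup `M(v,d) = {a ∈ v^⊥ : d ∣ a × v}`. -/
def MSub (v : Fin 3 → ℤ) (d : ℤ) : AddSubgroup (Fin 3 → ℤ) where
  carrier := {a | dot3 a v = 0 ∧ ∀ i, d ∣ cross3 a v i}
  zero_mem' := ⟨by simp [dot3], by intro i; rw [cross3_zero_left]; simp⟩
  add_mem' := by
    rintro a b ⟨ha, ha'⟩ ⟨hb, hb'⟩
    refine ⟨?_, ?_⟩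
    · simp only [dot3, Pi.add_apply] at *; linarith
    · intro i; rw [cross3_add_left]; exact dvd_add (ha' i) (hb' i)
  neg_mem' := by
    rintro a ⟨ha, ha'⟩
    refine ⟨?_, ?_⟩
    · simp only [dot3, Pi.neg_apply] at *; linarith
    · intro i; rw [cross3_neg_left]; simpa using (ha' i).neg_right

/-- The subgroup `Γ(v,d) = {a : d ∣ a × v, d² ∣ (a × v) × v}`. -/
def GammaSub (v : Fin 3 → ℤ) (d : ℤ) : AddSubgroup (Fin 3 → ℤ) where
  carrier := {a | (∀ i, d ∣ cross3 a v i) ∧ ∀ i, d^2 ∣ cross3 (cross3 a v) v i}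
  zero_mem' := by
    constructor <;> intro i <;> rw [cross3_zero_left] <;> simp [cross3_zero_left]
  add_mem' := by
    rintro a b ⟨ha, ha'⟩ ⟨hb, hb'⟩
    refine ⟨fun i => ?_, fun i => ?_⟩
    · rw [cross3_add_left]; exact dvd_add (ha i) (hb i)
    · rw [cross3_add_left, cross3_add_left]; exact dvd_add (ha' i) (hb' i)
  neg_mem' := by
    rintro a ⟨ha, ha'⟩
    refine ⟨fun i => ?_, fun i => ?_⟩
    · rw [cross3_neg_left]; simpa using (ha i).neg_right
    · rw [cross3_neg_left, cross3_neg_left]; simpa using (ha' i).neg_right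

def Primitive (v : Fin 3 → ℤ) : Prop := Int.gcd (Int.gcd (v 0) (v 1)) (v 2) = 1


section Aux

lemma dot3_comm (a b : Fin 3 → ℤ) : dot3 a b = dot3 b a := by simp [dot3]; ring

lemma dot3_smul_left (c : ℤ) (a v : Fin 3 → ℤ) : dot3 (c • a) v = c * dot3 a v := by
  simp [dot3]; ring

lemma cross3_smul_left (c : ℤ) (a v : Fin 3 → ℤ) (i : Fin 3) :
    cross3 (c • a) v i = c * cross3 a v i := by
  fin_cases i <;> simp [cross3] <;> ring

lemma cross3_self (v : Fin 3 → ℤ) (i : Fin 3) : cross3 v v i = 0 := by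
  fin_cases i <;> simp [cross3] <;> ring

lemma dot3_cross3_left (a v : Fin 3 → ℤ) : dot3 (cross3 a v) v = 0 := by
  simp [dot3, cross3]; ring

lemma cross3_cross3_eq (a v : Fin 3 → ℤ) (i : Fin 3) :
    cross3 (cross3 a v) v i = dot3 a v * v i - dot3 v v * a i := by
  fin_cases i <;> simp [cross3, dot3] <;> ring

lemma cross3_cross3_eq' (w v u : Fin 3 → ℤ) (i : Fin 3) :
    cross3 (cross3 w v) u i = dot3 w u * v i - dot3 v u * w i := by
  fin_cases i <;> simp [cross3, dot3] <;> ring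

lemma dvd_cross3 {c : ℤ} {x : Fin 3 → ℤ} (h : ∀ j, c ∣ x j) (u : Fin 3 → ℤ) (i : Fin 3) :
    c ∣ cross3 x u i := by
  fin_cases i <;> simp [cross3] <;>
    exact dvd_sub ((h _).mul_right _) ((h _).mul_right _)

lemma Primitive.exists_dot3_eq_one {v : Fin 3 → ℤ} (hv : Primitive v) :
    ∃ u : Fin 3 → ℤ, dot3 u v = 1 := by
  set g : ℤ := (Int.gcd (v 0) (v 1) : ℤ) with hg
  have h1 : g = v 0 * Int.gcdA (v 0) (v 1) + v 1 * Int.gcdB (v 0) (v 1) :=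
    Int.gcd_eq_gcd_ab _ _
  have h2 : (Int.gcd g (v 2) : ℤ) = g * Int.gcdA g (v 2) + v 2 * Int.gcdB g (v 2) :=
    Int.gcd_eq_gcd_ab _ _
  have h3 : (Int.gcd g (v 2) : ℤ) = 1 := by
    rw [hg]; exact_mod_cast congrArg (Nat.cast : ℕ → ℤ) hv
  refine ⟨![Int.gcdA (v 0) (v 1) * Int.gcdA g (v 2),
            Int.gcdB (v 0) (v 1) * Int.gcdA g (v 2),
            Int.gcdB g (v 2)], ?_⟩
  simp only [dot3, Matrix.cons_val_zero, Matrix.cons_val_one, Matrix.head_cons,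
    Matrix.cons_val_two, Matrix.tail_cons]
  rw [h3] at h2
  linear_combination -h2 - Int.gcdA g (v 2) * h1

lemma bezout_dvd {u v : Fin 3 → ℤ} (hu : dot3 u v = 1) {c x : ℤ}
    (h : ∀ i, c ∣ x * v i) : c ∣ x := by
  have hx : x = u 0 * (x * v 0) + u 1 * (x * v 1) + u 2 * (x * v 2) := by
    simp only [dot3] at hu
    linear_combination x * hu.symm
  rw [hx]
  exact dvd_add (dvd_add ((h 0).mul_left _) ((h 1).mul_left _)) ((h 2).mul_left _)

lemma mem_gamma_iff {v u : Fin 3 → ℤ} (hu : dot3 u v = 1) {d : ℤ}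
    (hdvd : d ^ 2 ∣ dot3 v v) (a : Fin 3 → ℤ) :
    a ∈ GammaSub v d ↔ (∀ i, d ∣ cross3 a v i) ∧ d ^ 2 ∣ dot3 a v := by
  constructor
  · rintro ⟨h1, h2⟩
    refine ⟨h1, ?_⟩
    apply bezout_dvd hu
    intro i
    have h3 := h2 i
    rw [cross3_cross3_eq] at h3
    have h4 : d ^ 2 ∣ dot3 v v * a i := hdvd.mul_right _
    have := dvd_add h3 h4
    simpa using this
  · rintro ⟨h1, h2⟩
    refine ⟨h1, fun i => ?_⟩
    rw [cross3_cross3_eq]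
    exact dvd_sub (h2.mul_right _) (hdvd.mul_right _)

end Aux

/-- For primitive `v` with `d² ∣ ‖v‖²`, the subgroup `Γ(v,d)` contains `v`
and has index `d³` in `ℤ³`. -/
theorem Gamma_mem_and_index (v : Fin 3 → ℤ) (hv : Primitive v) (d : ℕ) (hd : 0 < d)
    (hdvd : (d : ℤ)^2 ∣ dot3 v v) :
    v ∈ GammaSub v (d : ℤ) ∧ (GammaSub v (d : ℤ)).index = d ^ 3 := by
  obtain ⟨u, hu⟩ := hv.exists_dot3_eq_one
  set D : ℤ := (d : ℤ) with hD
  have hdD : D ∣ D ^ 2 := dvd_pow_self D (by norm_num)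
  -- membership of v
  have hmem : v ∈ GammaSub v D := by
    rw [mem_gamma_iff hu hdvd]
    exact ⟨fun i => by rw [cross3_self]; exact dvd_zero _, hdvd⟩
  refine ⟨hmem, ?_⟩
  -- the hom a ↦ a·v mod d²
  let φ : (Fin 3 → ℤ) →+ ZMod (d ^ 2) :=
    { toFun := fun a => ((dot3 a v : ℤ) : ZMod (d ^ 2))
      map_zero' := by simp [dot3]
      map_add' := by
        intro a b
        simp only [dot3, Pi.add_apply]
        push_cast
        ring }
  have hK : ∀ a : Fin 3 → ℤ, a ∈ φ.ker ↔ D ^ 2 ∣ dot3 a v := by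
    intro a
    rw [AddMonoidHom.mem_ker]
    show ((dot3 a v : ℤ) : ZMod (d ^ 2)) = 0 ↔ _
    rw [ZMod.intCast_zmod_eq_zero_iff_dvd]
    push_cast
    rfl
  have hφsurj : Function.Surjective φ := by
    intro z
    obtain ⟨n, rfl⟩ := ZMod.intCast_surjective z
    refine ⟨n • u, ?_⟩
    show ((dot3 (n • u) v : ℤ) : ZMod (d ^ 2)) = (n : ZMod (d ^ 2))
    rw [dot3_smul_left, hu, mul_one]
  have hKindex : (φ.ker).index = d ^ 2 := by
    rw [AddSubgroup.index_ker, AddMonoidHom.range_eq_top_of_surjective φ hφsurj,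
      show Nat.card (⊤ : AddSubgroup (ZMod (d ^ 2))) = Nat.card (ZMod (d ^ 2)) from
        Nat.card_congr AddSubgroup.topEquiv.toEquiv, Nat.card_zmod]
  have hΓK : GammaSub v D ≤ φ.ker := by
    intro a ha
    rw [hK]
    exact ((mem_gamma_iff hu hdvd a).mp ha).2
  -- the hom a ↦ a×v mod d on K
  let ψ : φ.ker →+ (Fin 3 → ZMod d) :=
    { toFun := fun a => fun i => ((cross3 (a : Fin 3 → ℤ) v i : ℤ) : ZMod d)
      map_zero' := by
        funext i
        show ((cross3 (0 : Fin 3 → ℤ) v i : ℤ) : ZMod d) = 0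
        rw [cross3_zero_left]
        simp
      map_add' := by
        intro a b
        funext i
        show ((cross3 ((a : Fin 3 → ℤ) + b) v i : ℤ) : ZMod d) = _
        rw [cross3_add_left]
        simp only [Pi.add_apply]
        push_cast
        rfl }
  have hkerψ : ψ.ker = (GammaSub v D).addSubgroupOf φ.ker := by
    ext a
    rw [AddMonoidHom.mem_ker, AddSubgroup.mem_addSubgroupOf,
      mem_gamma_iff hu hdvd]
    constructor
    · intro h
      refine ⟨fun i => ?_, (hK _).mp a.2⟩
      have h2 : ((cross3 (a : Fin 3 → ℤ) v i : ℤ) : ZMod d) = 0 := congrFun h i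
      rwa [ZMod.intCast_zmod_eq_zero_iff_dvd] at h2
    · rintro ⟨h1, -⟩
      funext i
      simp only [Pi.zero_apply]
      show ((cross3 (a : Fin 3 → ℤ) v i : ℤ) : ZMod d) = 0
      rw [ZMod.intCast_zmod_eq_zero_iff_dvd]
      exact h1 i
  set vb : Fin 3 → ZMod d := fun i => ((v i : ℤ) : ZMod d) with hvb
  have hrange : ψ.range = AddSubgroup.zmultiples vb := by
    ext w
    rw [AddMonoidHom.mem_range, AddSubgroup.mem_zmultiples_iff]
    constructor
    · rintro ⟨a, rfl⟩
      refine ⟨dot3 (cross3 (a : Fin 3 → ℤ) v) u, ?_⟩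
      funext i
      have haK : D ^ 2 ∣ dot3 (a : Fin 3 → ℤ) v := (hK _).mp a.2
      have hw : ∀ j, D ^ 2 ∣ cross3 (cross3 (a : Fin 3 → ℤ) v) v j := by
        intro j
        rw [cross3_cross3_eq]
        exact dvd_sub (haK.mul_right _) (hdvd.mul_right _)
      have h2 : D ^ 2 ∣ cross3 (cross3 (cross3 (a : Fin 3 → ℤ) v) v) u i :=
        dvd_cross3 hw u i
      rw [cross3_cross3_eq', dot3_comm v u, hu, one_mul] at h2
      have h3 : D ∣ dot3 (cross3 (a : Fin 3 → ℤ) v) u * v i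
          - cross3 (a : Fin 3 → ℤ) v i := hdD.trans h2
      have h4 : ((dot3 (cross3 (a : Fin 3 → ℤ) v) u * v i
          - cross3 (a : Fin 3 → ℤ) v i : ℤ) : ZMod d) = 0 := by
        rw [ZMod.intCast_zmod_eq_zero_iff_dvd]
        exact_mod_cast h3
      have h5 : ((dot3 (cross3 (a : Fin 3 → ℤ) v) u * v i : ℤ) : ZMod d)
          = ((cross3 (a : Fin 3 → ℤ) v i : ℤ) : ZMod d) := by
        push_cast at h4 ⊢
        exact sub_eq_zero.mp h4
      show (dot3 (cross3 (a : Fin 3 → ℤ) v) u) • vb i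
          = ((cross3 (a : Fin 3 → ℤ) v i : ℤ) : ZMod d)
      rw [← h5, zsmul_eq_mul]
      show ((dot3 (cross3 (a : Fin 3 → ℤ) v) u : ℤ) : ZMod d) * ((v i : ℤ) : ZMod d)
          = ((dot3 (cross3 (a : Fin 3 → ℤ) v) u * v i : ℤ) : ZMod d)
      push_cast
      ring
    · rintro ⟨t, rfl⟩
      have hmemK : t • cross3 u v ∈ φ.ker := by
        rw [hK, dot3_smul_left, dot3_cross3_left, mul_zero]
        exact dvd_zero _
      refine ⟨⟨t • cross3 u v, hmemK⟩, ?_⟩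
      funext i
      show ((cross3 (t • cross3 u v) v i : ℤ) : ZMod d) = t • vb i
      rw [cross3_smul_left, cross3_cross3_eq, hu, one_mul]
      have hdvv : ((dot3 v v : ℤ) : ZMod d) = 0 := by
        rw [ZMod.intCast_zmod_eq_zero_iff_dvd]
        exact_mod_cast hdD.trans hdvd
      rw [zsmul_eq_mul]
      show ((t * (v i - dot3 v v * u i) : ℤ) : ZMod d) = ((t : ℤ) : ZMod d) * ((v i : ℤ) : ZMod d)
      push_cast [hdvv]
      ring
  have hord : addOrderOf vb = d := by
    apply Nat.dvd_antisymm
    · apply addOrderOf_dvd_of_nsmul_eq_zero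
      funext i
      rw [hvb]
      show d • ((v i : ℤ) : ZMod d) = 0
      rw [nsmul_eq_mul, ZMod.natCast_self, zero_mul]
    · have h := addOrderOf_nsmul_eq_zero vb
      have h2 : ∀ i, D ∣ (addOrderOf vb : ℤ) * v i := by
        intro i
        have h3 := congrFun h i
        simp only [Pi.smul_apply, Pi.zero_apply, hvb] at h3
        rw [← ZMod.intCast_zmod_eq_zero_iff_dvd]
        push_cast
        rw [nsmul_eq_mul] at h3
        push_cast at h3
        exact h3
      have h4 : D ∣ (addOrderOf vb : ℤ) := bezout_dvd hu h2
      rw [hD] at h4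
      exact_mod_cast h4
  have hrel : (GammaSub v D).relIndex φ.ker = d := by
    rw [AddSubgroup.relIndex, ← hkerψ, AddSubgroup.index_ker, hrange,
      Nat.card_zmultiples, hord]
  have hmain := AddSubgroup.relIndex_mul_index hΓK
  rw [hrel, hKindex] at hmain
  rw [← hmain]
  ring
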